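/- Deterministic single-copy transformations under the Z₂-SSR: Let (p₀,p₁) and (q₀,q₁) be standard-form weight pairs of Z₂-noninvariant pure states (all four entries strictly positive, each pair summing to 1). The following are equivalent. (i) There exists a finite trace-preserving Z₂-invariant Kraus family achieving the transformation deterministically: a finite index set with, for each index μ, a bit B_μ ∈ {0,1}, nonnegative coefficients c₀_μ, c₁_μ, and a weight v_μ ≥ 0, such that ∑_μ v_μ = 1, ∑_μ (c₀_μ)² = 1, ∑_μ (c₁_μ)² = 1, and for each μ: if B_μ = 0 then (c₀_μ)²·p₀ = v_μ·q₀ and (c₁_μ)²·p₁ = v_μ·q₁, while if B_μ = 1 then (c₀_μ)²·p₀ = v_μ·q₁ and (c₁_μ)²·p₁ = v_μ·q₀. (ii) C(p₀,p₁) ≥ C(q₀,q₁), that is, min(p₀,p₁) ≥ min(q₀,q₁). -/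

import Mathlib

/-- **Deterministic single-copy transformations under the Z₂-SSR.**
For Z₂-noninvariant pure states with standard-form weight pairs `(p₀, p₁)` and
`(q₀, q₁)`, a deterministic (trace-preserving) Z₂-invariant Kraus family achieving
the transformation exists iff `C(p₀,p₁) = 2·min(p₀,p₁) ≥ C(q₀,q₁) = 2·min(q₀,q₁)`. -/
theorem z2_deterministic_transformation
    (p₀ p₁ q₀ q₁ : ℝ)
    (hp₀ : 0 < p₀) (hp₁ : 0 < p₁) (hp : p₀ + p₁ = 1)
    (hq₀ : 0 < q₀) (hq₁ : 0 < q₁) (hq : q₀ + q₁ = 1) :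
    (∃ (n : ℕ) (B : Fin n → Bool) (c₀ c₁ v : Fin n → ℝ),
        (∀ i, 0 ≤ c₀ i) ∧ (∀ i, 0 ≤ c₁ i) ∧ (∀ i, 0 ≤ v i) ∧
        (∑ i, v i = 1) ∧ (∑ i, (c₀ i) ^ 2 = 1) ∧ (∑ i, (c₁ i) ^ 2 = 1) ∧
        (∀ i, if B i then
            (c₀ i) ^ 2 * p₀ = v i * q₁ ∧ (c₁ i) ^ 2 * p₁ = v i * q₀
          else
            (c₀ i) ^ 2 * p₀ = v i * q₀ ∧ (c₁ i) ^ 2 * p₁ = v i * q₁)) ↔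
      2 * min q₀ q₁ ≤ 2 * min p₀ p₁ := by
  constructor
  · rintro ⟨n, B, c₀, c₁, v, hc₀, hc₁, hv, hvsum, h0sum, h1sum, heq⟩
    have key0 : p₀ = ∑ i, v i * (if B i then q₁ else q₀) := by
      have h : p₀ = ∑ i, c₀ i ^ 2 * p₀ := by rw [← Finset.sum_mul, h0sum, one_mul]
      rw [h]
      refine Finset.sum_congr rfl fun i _ => ?_
      have hi := heq i
      cases hB : B i <;> simp [hB] at hi ⊢ <;> exact hi.1
    have key1 : p₁ = ∑ i, v i * (if B i then q₀ else q₁) := by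
      have h : p₁ = ∑ i, c₁ i ^ 2 * p₁ := by rw [← Finset.sum_mul, h1sum, one_mul]
      rw [h]
      refine Finset.sum_congr rfl fun i _ => ?_
      have hi := heq i
      cases hB : B i <;> simp [hB] at hi ⊢ <;> exact hi.2
    have hb0 : min q₀ q₁ ≤ p₀ := by
      rw [key0]
      calc min q₀ q₁ = ∑ i, v i * min q₀ q₁ := by rw [← Finset.sum_mul, hvsum, one_mul]
        _ ≤ ∑ i, v i * (if B i then q₁ else q₀) := by
            refine Finset.sum_le_sum fun i _ => ?_
            refine mul_le_mul_of_nonneg_left ?_ (hv i)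
            cases B i <;> simp [min_le_left, min_le_right]
    have hb1 : min q₀ q₁ ≤ p₁ := by
      rw [key1]
      calc min q₀ q₁ = ∑ i, v i * min q₀ q₁ := by rw [← Finset.sum_mul, hvsum, one_mul]
        _ ≤ ∑ i, v i * (if B i then q₀ else q₁) := by
            refine Finset.sum_le_sum fun i _ => ?_
            refine mul_le_mul_of_nonneg_left ?_ (hv i)
            cases B i <;> simp [min_le_left, min_le_right]
    have := le_min hb0 hb1
    linarith
  · intro h
    have hm : min q₀ q₁ ≤ min p₀ p₁ := by linarith
    have hge : min q₀ q₁ ≤ p₀ := hm.trans (min_le_left _ _)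
    have hle : p₀ ≤ max q₀ q₁ := by
      have h1 : min q₀ q₁ + max q₀ q₁ = q₀ + q₁ := min_add_max q₀ q₁
      have h2 : min q₀ q₁ ≤ p₁ := hm.trans (min_le_right _ _)
      linarith
    -- find t ∈ [0,1] with t*q₀ + (1-t)*q₁ = p₀
    obtain ⟨t, ht0, ht1, hteq⟩ : ∃ t : ℝ, 0 ≤ t ∧ t ≤ 1 ∧ t * q₀ + (1 - t) * q₁ = p₀ := by
      rcases lt_trichotomy q₀ q₁ with hlt | heq' | hgt
      · rw [min_eq_left hlt.le] at hge
        rw [max_eq_right hlt.le] at hle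
        have hne : q₁ - q₀ ≠ 0 := by linarith
        have hkey : (q₁ - p₀) / (q₁ - q₀) * (q₁ - q₀) = q₁ - p₀ := div_mul_cancel₀ _ hne
        refine ⟨(q₁ - p₀) / (q₁ - q₀), ?_, ?_, ?_⟩
        · apply div_nonneg <;> linarith
        · rw [div_le_one (by linarith)]; linarith
        · nlinarith [hkey]
      · subst heq'
        have hq2 : q₀ = 1 / 2 := by linarith
        have hp2 : p₀ = 1 / 2 := by
          simp only [min_self] at hm
          have : min p₀ p₁ ≤ p₀ := min_le_left _ _
          have : min p₀ p₁ ≤ p₁ := min_le_right _ _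
          rcases min_le_iff.mp (le_refl (min p₀ p₁)) with h' | h' <;> nlinarith [hm]
        exact ⟨1, zero_le_one, le_refl 1, by rw [hp2, hq2]; ring⟩
      · rw [min_eq_right hgt.le] at hge
        rw [max_eq_left hgt.le] at hle
        have hne : q₀ - q₁ ≠ 0 := by linarith
        have hkey : (p₀ - q₁) / (q₀ - q₁) * (q₀ - q₁) = p₀ - q₁ := div_mul_cancel₀ _ hne
        refine ⟨(p₀ - q₁) / (q₀ - q₁), ?_, ?_, ?_⟩
        · apply div_nonneg <;> linarith
        · rw [div_le_one (by linarith)]; linarith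
        · nlinarith [hkey]
    have hteq' : t * q₁ + (1 - t) * q₀ = p₁ := by linarith
    have ha0 : (0:ℝ) ≤ t * q₀ / p₀ := by positivity
    have ha1 : (0:ℝ) ≤ (1 - t) * q₁ / p₀ := by
      apply div_nonneg _ hp₀.le; nlinarith
    have hb0' : (0:ℝ) ≤ t * q₁ / p₁ := by positivity
    have hb1' : (0:ℝ) ≤ (1 - t) * q₀ / p₁ := by
      apply div_nonneg _ hp₁.le; nlinarith
    refine ⟨2, ![false, true],
      ![Real.sqrt (t * q₀ / p₀), Real.sqrt ((1 - t) * q₁ / p₀)],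
      ![Real.sqrt (t * q₁ / p₁), Real.sqrt ((1 - t) * q₀ / p₁)],
      ![t, 1 - t], ?_, ?_, ?_, ?_, ?_, ?_, ?_⟩
    · intro i; fin_cases i <;> simp [Real.sqrt_nonneg]
    · intro i; fin_cases i <;> simp [Real.sqrt_nonneg]
    · intro i; fin_cases i <;> simp <;> linarith
    · simp [Fin.sum_univ_two]
    · simp only [Fin.sum_univ_two, Matrix.cons_val_zero, Matrix.cons_val_one, Matrix.head_cons,
        Real.sq_sqrt ha0, Real.sq_sqrt ha1]
      field_simp
      linarith
    · simp only [Fin.sum_univ_two, Matrix.cons_val_zero, Matrix.cons_val_one, Matrix.head_cons,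
        Real.sq_sqrt hb0', Real.sq_sqrt hb1']
      field_simp
      linarith
    · intro i
      fin_cases i
      · simp only [Fin.mk_zero, Matrix.cons_val_zero, Bool.false_eq_true, if_false]
        constructor
        · rw [Real.sq_sqrt ha0]; field_simp
        · rw [Real.sq_sqrt hb0']; field_simp
      · simp only [Fin.mk_one, Matrix.cons_val_one, Matrix.head_cons, Matrix.cons_val_zero, if_true]
        constructor
        · rw [Real.sq_sqrt ha1]; field_simp
        · rw [Real.sq_sqrt hb1']; field_simp
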